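/- For G = ℤ² with generating set S = {(1,0),(−1,0),(0,1),(0,−1)}, a probability distribution (x₁,x₂,x₃,x₄) on S (x_i ≥ 0, ∑x_i = 1) satisfies all centrality equations if and only if x₁x₂ = x₃x₄; consequently the solution set is homeomorphic to a closed 2-dimensional disk. -/

import Mathlib

open scoped BigOperators
open Metric Set


private lemma part1 (x : Fin 4 → ℝ) (hx : ∀ i, 0 ≤ x i) (hsum : ∑ i, x i = 1) :
    (∀ m n : Fin 4 → ℕ, ∑ i, m i = ∑ i, n i →
        (m 0 : ℤ) - (m 1 : ℤ) = (n 0 : ℤ) - (n 1 : ℤ) →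
        (m 2 : ℤ) - (m 3 : ℤ) = (n 2 : ℤ) - (n 3 : ℤ) →
        ∏ i, x i ^ m i = ∏ i, x i ^ n i) ↔ x 0 * x 1 = x 2 * x 3 := by
  constructor
  · intro H
    have := H ![1,1,0,0] ![0,0,1,1] (by decide) (by decide) (by decide)
    simpa [Fin.prod_univ_four] using this
  · intro h m n h1 h2 h3
    rw [Fin.sum_univ_four, Fin.sum_univ_four] at h1
    obtain ⟨k, hk⟩ : ∃ k, (m 0 = n 0 + k ∧ m 1 = n 1 + k ∧ n 2 = m 2 + k ∧ n 3 = m 3 + k) ∨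
        (n 0 = m 0 + k ∧ n 1 = m 1 + k ∧ m 2 = n 2 + k ∧ m 3 = n 3 + k) := by
      rcases le_total (n 0) (m 0) with hc | hc
      · exact ⟨m 0 - n 0, Or.inl (by omega)⟩
      · exact ⟨n 0 - m 0, Or.inr (by omega)⟩
    have hpow : (x 0 * x 1) ^ k = (x 2 * x 3) ^ k := by rw [h]
    rw [Fin.prod_univ_four, Fin.prod_univ_four]
    rcases hk with ⟨e0, e1, e2, e3⟩ | ⟨e0, e1, e2, e3⟩ <;> rw [e0, e1, e2, e3]
    · linear_combination (x 0 ^ n 0 * x 1 ^ n 1 * x 2 ^ m 2 * x 3 ^ m 3) * hpow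
    · linear_combination (x 0 ^ m 0 * x 1 ^ m 1 * x 2 ^ n 2 * x 3 ^ n 3) * hpow.symm


noncomputable section

abbrev E2 := EuclideanSpace ℝ (Fin 2)

def Dia : Set E2 := {p | |p 0| + |p 1| ≤ 1}

lemma coord_cont (i : Fin 2) : Continuous (fun p : E2 => p i) :=
  (EuclideanSpace.proj (𝕜 := ℝ) i).continuous

lemma f_cont : Continuous (fun p : E2 => |p 0| + |p 1|) :=
  ((coord_cont 0).abs).add ((coord_cont 1).abs)

lemma Dia_closed : IsClosed Dia :=
  isClosed_le f_cont continuous_const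

lemma Dia_convex : Convex ℝ Dia := by
  intro p hp q hq a b ha hb hab
  have h0 : (a • p + b • q) 0 = a * p 0 + b * q 0 := rfl
  have h1 : (a • p + b • q) 1 = a * p 1 + b * q 1 := rfl
  simp only [Dia, mem_setOf_eq] at hp hq ⊢
  rw [h0, h1]
  calc |a * p 0 + b * q 0| + |a * p 1 + b * q 1|
      ≤ (|a * p 0| + |b * q 0|) + (|a * p 1| + |b * q 1|) := by
        gcongr <;> exact abs_add_le _ _
    _ = a * (|p 0| + |p 1|) + b * (|q 0| + |q 1|) := by
        rw [abs_mul, abs_mul, abs_mul, abs_mul, abs_of_nonneg ha, abs_of_nonneg hb]; ring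
    _ ≤ a * 1 + b * 1 := by gcongr
    _ = 1 := by rw [mul_one, mul_one, hab]

lemma Dia_int : (interior Dia).Nonempty := by
  have hopen : IsOpen {p : E2 | |p 0| + |p 1| < 1} := isOpen_lt f_cont continuous_const
  have hsub : {p : E2 | |p 0| + |p 1| < 1} ⊆ Dia := fun p hp => le_of_lt (α := ℝ) hp
  have hmem : (0:E2) ∈ {p : E2 | |p 0| + |p 1| < 1} := by
    show |(0:E2) 0| + |(0:E2) 1| < 1
    norm_num
  exact ⟨0, mem_interior.2 ⟨_, hsub, hopen, hmem⟩⟩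

lemma Dia_bdd : Bornology.IsBounded Dia := by
  refine (Metric.isBounded_closedBall (x := (0:E2)) (r := 1)).subset ?_
  intro p hp
  simp only [mem_closedBall, dist_zero_right]
  rw [EuclideanSpace.norm_eq]
  have : Real.sqrt (∑ i, ‖p i‖ ^ 2) ≤ Real.sqrt ((|p 0| + |p 1|)^2) := by
    apply Real.sqrt_le_sqrt
    rw [Fin.sum_univ_two]
    simp only [Real.norm_eq_abs]
    nlinarith [abs_nonneg (p 0), abs_nonneg (p 1)]
  calc Real.sqrt (∑ i, ‖p i‖ ^ 2) ≤ Real.sqrt ((|p 0| + |p 1|)^2) := this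
    _ = |p 0| + |p 1| := Real.sqrt_sq (by positivity)
    _ ≤ 1 := hp

lemma Dia_homeo : Nonempty (↥Dia ≃ₜ ↥(Metric.closedBall (0 : E2) 1)) := by
  obtain ⟨h, -, h2, -⟩ :=
    exists_homeomorph_image_interior_closure_frontier_eq_unitBall Dia_convex Dia_int Dia_bdd
  rw [Dia_closed.closure_eq] at h2
  exact ⟨(h.image Dia).trans (Homeomorph.setCongr h2)⟩

def Sset : Set (Fin 4 → ℝ) :=
  {y : Fin 4 → ℝ | (∀ i, 0 ≤ y i) ∧ ∑ i, y i = 1 ∧ y 0 * y 1 = y 2 * y 3}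

lemma Sset_compact : IsCompact Sset := by
  have hclosed : IsClosed Sset := by
    have : Sset = (⋂ i, {y : Fin 4 → ℝ | 0 ≤ y i}) ∩
        ({y : Fin 4 → ℝ | ∑ i, y i = 1} ∩ {y : Fin 4 → ℝ | y 0 * y 1 = y 2 * y 3}) := by
      ext y; simp [Sset, Set.mem_iInter, and_assoc]
    rw [this]
    refine ((isClosed_iInter fun i =>
        isClosed_le continuous_const (continuous_apply i))).inter (IsClosed.inter ?_ ?_)
    · exact isClosed_eq (by fun_prop) continuous_const
    · exact isClosed_eq (((continuous_apply 0).mul (continuous_apply 1)))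
        (((continuous_apply 2).mul (continuous_apply 3)))
  refine IsCompact.of_isClosed_subset (isCompact_Icc (a := (0 : Fin 4 → ℝ)) (b := 1)) hclosed ?_
  rintro y ⟨hy0, hy1, -⟩
  constructor
  · intro i; exact hy0 i
  · intro i
    have : y i ≤ ∑ j, y j := Finset.single_le_sum (fun j _ => hy0 j) (Finset.mem_univ i)
    simpa [hy1] using this

def SDequiv : ↥Sset ≃ ↥Dia where
  toFun y := ⟨(WithLp.toLp 2 ![y.1 0 - y.1 1, y.1 2 - y.1 3] : E2), by
    obtain ⟨hpos, hsum, hprod⟩ := y.2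
    have hs : y.1 0 + y.1 1 + y.1 2 + y.1 3 = 1 := by
      rw [← hsum, Fin.sum_univ_four]
    show |(WithLp.toLp 2 ![y.1 0 - y.1 1, y.1 2 - y.1 3] : E2) 0| +
        |(WithLp.toLp 2 ![y.1 0 - y.1 1, y.1 2 - y.1 3] : E2) 1| ≤ 1
    simp only [PiLp.toLp_apply, Matrix.cons_val_zero, Matrix.cons_val_one, Matrix.head_cons]
    have h01 : |y.1 0 - y.1 1| ≤ y.1 0 + y.1 1 :=
      abs_le.2 ⟨by linarith [hpos 0, hpos 1], by linarith [hpos 0, hpos 1]⟩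
    have h23 : |y.1 2 - y.1 3| ≤ y.1 2 + y.1 3 :=
      abs_le.2 ⟨by linarith [hpos 2, hpos 3], by linarith [hpos 2, hpos 3]⟩
    linarith⟩
  invFun p := ⟨![((1 + p.1 0)^2 - (p.1 1)^2)/4, ((1 - p.1 0)^2 - (p.1 1)^2)/4,
      ((1 + p.1 1)^2 - (p.1 0)^2)/4, ((1 - p.1 1)^2 - (p.1 0)^2)/4], by
    have hp : |p.1 0| + |p.1 1| ≤ 1 := p.2
    set u := p.1 0 with hu
    set v := p.1 1 with hv
    have k1 : -|u| ≤ u := neg_abs_le u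
    have k2 : u ≤ |u| := le_abs_self u
    have k3 : -|v| ≤ v := neg_abs_le v
    have k4 : v ≤ |v| := le_abs_self v
    refine ⟨?_, ?_, ?_⟩
    · intro i
      fin_cases i <;>
        simp only [show ((⟨0, by norm_num⟩ : Fin 4) = 0) from rfl,
          show ((⟨1, by norm_num⟩ : Fin 4) = 1) from rfl,
          show ((⟨2, by norm_num⟩ : Fin 4) = 2) from rfl,
          show ((⟨3, by norm_num⟩ : Fin 4) = 3) from rfl,
          Matrix.cons_val_zero, Matrix.cons_val_one, Matrix.head_cons,
          Matrix.cons_val_two, Matrix.cons_val_three, Matrix.tail_cons] <;>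
        nlinarith [mul_nonneg (by linarith : (0:ℝ) ≤ 1 + u - v) (by linarith : (0:ℝ) ≤ 1 + u + v),
          mul_nonneg (by linarith : (0:ℝ) ≤ 1 - u - v) (by linarith : (0:ℝ) ≤ 1 - u + v),
          mul_nonneg (by linarith : (0:ℝ) ≤ 1 + v - u) (by linarith : (0:ℝ) ≤ 1 + v + u),
          mul_nonneg (by linarith : (0:ℝ) ≤ 1 - v - u) (by linarith : (0:ℝ) ≤ 1 - v + u)]
    · rw [Fin.sum_univ_four]
      simp only [Matrix.cons_val_zero, Matrix.cons_val_one, Matrix.head_cons,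
        Matrix.cons_val_two, Matrix.cons_val_three, Matrix.tail_cons]
      ring
    · simp only [Matrix.cons_val_zero, Matrix.cons_val_one, Matrix.head_cons,
        Matrix.cons_val_two, Matrix.cons_val_three, Matrix.tail_cons]
      ring⟩
  left_inv := by
    rintro ⟨y, hpos, hsum, hprod⟩
    apply Subtype.ext
    have hs : y 0 + y 1 + y 2 + y 3 = 1 := by rw [← hsum, Fin.sum_univ_four]
    funext i
    fin_cases i <;>
      simp only [show ((⟨0, by norm_num⟩ : Fin 4) = 0) from rfl,
        show ((⟨1, by norm_num⟩ : Fin 4) = 1) from rfl,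
        show ((⟨2, by norm_num⟩ : Fin 4) = 2) from rfl,
        show ((⟨3, by norm_num⟩ : Fin 4) = 3) from rfl,
        Matrix.cons_val_zero, Matrix.cons_val_one, Matrix.head_cons,
        Matrix.cons_val_two, Matrix.cons_val_three, Matrix.tail_cons]
    · linear_combination ((y 0 + y 1 - y 2 - y 3 - 1)/4) * hs - hprod
    · linear_combination ((y 0 + y 1 - y 2 - y 3 - 1)/4) * hs - hprod
    · linear_combination ((y 2 + y 3 - y 0 - y 1 - 1)/4) * hs + hprod
    · linear_combination ((y 2 + y 3 - y 0 - y 1 - 1)/4) * hs + hprod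
  right_inv := by
    rintro ⟨p, hp⟩
    apply Subtype.ext
    show (WithLp.toLp 2 ![_, _] : E2) = p
    ext i
    fin_cases i <;>
      · simp [PiLp.toLp_apply, Matrix.cons_val_zero, Matrix.cons_val_one, Matrix.head_cons,
          Matrix.cons_val_two, Matrix.cons_val_three, Matrix.tail_cons]
        ring_nf

lemma SDequiv_cont : Continuous SDequiv := by
  have hraw : Continuous fun y : ↥Sset => (![y.1 0 - y.1 1, y.1 2 - y.1 3] : Fin 2 → ℝ) := by
    refine continuous_pi fun i => ?_
    fin_cases i <;>
      simp only [Matrix.cons_val_zero, Matrix.cons_val_one, Matrix.head_cons] <;>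
      exact ((continuous_apply _).comp continuous_subtype_val).sub
        ((continuous_apply _).comp continuous_subtype_val)
  exact Continuous.subtype_mk
    ((PiLp.continuous_toLp 2 (fun _ : Fin 2 => ℝ)).comp hraw) _

lemma S_homeo : Nonempty (↥Sset ≃ₜ ↥(Metric.closedBall (0 : E2) 1)) := by
  have : CompactSpace ↥Sset := isCompact_iff_compactSpace.1 Sset_compact
  exact ⟨(SDequiv_cont.homeoOfEquivCompactToT2 (f := SDequiv)).trans Dia_homeo.some⟩


/-- for `G = ℤ²` with generators `(1,0), (-1,0), (0,1), (0,-1)`, a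
probability distribution `x` on the four generators satisfies all centrality
equations iff `x₁x₂ = x₃x₄`; consequently the solution set is homeomorphic to a
closed 2-dimensional disk. -/
theorem absolute_Z2_standard_generators (x : Fin 4 → ℝ)
    (hx : ∀ i, 0 ≤ x i) (hsum : ∑ i, x i = 1) :
    ((∀ m n : Fin 4 → ℕ, ∑ i, m i = ∑ i, n i →
        (m 0 : ℤ) - (m 1 : ℤ) = (n 0 : ℤ) - (n 1 : ℤ) →
        (m 2 : ℤ) - (m 3 : ℤ) = (n 2 : ℤ) - (n 3 : ℤ) →
        ∏ i, x i ^ m i = ∏ i, x i ^ n i) ↔ x 0 * x 1 = x 2 * x 3) ∧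
    Nonempty
      (↥{y : Fin 4 → ℝ | (∀ i, 0 ≤ y i) ∧ ∑ i, y i = 1 ∧ y 0 * y 1 = y 2 * y 3} ≃ₜ
        ↥(Metric.closedBall (0 : EuclideanSpace ℝ (Fin 2)) 1)) :=
  ⟨part1 x hx hsum, S_homeo⟩

end
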